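/- Let r and m be positive integers with r ≤ m. For every matrix T ∈ Matrix (Fin r) (Fin m) ℝ and every strictly monotone map J : Fin r → Fin m, the r×r submatrix T_J of T formed by the columns indexed by J satisfies det(T_J)² ≤ det(T * Tᵀ). In particular, if det(T * Tᵀ) ≠ 0 then |det(T_J)| / sqrt(det(T * Tᵀ)) ≤ 1. -/

import Mathlib

open scoped Matrix

private lemma psd_det_nonneg {n : Type*} [Fintype n] [DecidableEq n]
    {A : Matrix n n ℝ} (hA : A.PosSemidef) : 0 ≤ A.det := by
  rw [hA.1.det_eq_prod_eigenvalues]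
  exact Finset.prod_nonneg fun i _ => hA.eigenvalues_nonneg i

private lemma one_le_det_one_add {n : Type*} [Fintype n] [DecidableEq n]
    {C : Matrix n n ℝ} (hC : C.PosSemidef) : 1 ≤ (1 + C).det := by
  set U := (hC.1.eigenvectorUnitary : Matrix n n ℝ) with hUdef
  have hU : U ∈ Matrix.unitaryGroup n ℝ := hC.1.eigenvectorUnitary.2
  have hUU : U * star U = 1 := (Matrix.mem_unitaryGroup_iff).mp hU
  have h1 : (1 : Matrix n n ℝ) + C
      = U * (1 + Matrix.diagonal (RCLike.ofReal ∘ hC.1.eigenvalues)) * star U := by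
    rw [Matrix.mul_add, Matrix.add_mul, Matrix.mul_one, hUU]
    conv_lhs => rw [hC.1.spectral_theorem, Unitary.conjStarAlgAut_apply]
  have h2 : (1 : Matrix n n ℝ) + Matrix.diagonal (RCLike.ofReal ∘ hC.1.eigenvalues)
      = Matrix.diagonal (fun i => 1 + hC.1.eigenvalues i) := by
    rw [← Matrix.diagonal_one, Matrix.diagonal_add]
    rfl
  have hdetU : (1 + C).det = (Matrix.diagonal (fun i => 1 + hC.1.eigenvalues i)).det := by
    rw [h1, h2, Matrix.det_mul, Matrix.det_mul, mul_comm, ← mul_assoc, ← Matrix.det_mul,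
      (Matrix.mem_unitaryGroup_iff').mp hU, Matrix.det_one, one_mul]
  rw [hdetU, Matrix.det_diagonal]
  calc (1:ℝ) = ∏ _i : n, 1 := by simp
    _ ≤ ∏ i, (1 + hC.1.eigenvalues i) := Finset.prod_le_prod (fun _ _ => zero_le_one)
        (fun i _ => le_add_of_nonneg_right (hC.eigenvalues_nonneg i))

/-- (Cauchy–Binet estimate.) For `0 < r ≤ m`, any real `r × m` matrix `T`
and any strictly monotone `J : Fin r → Fin m`, the `r × r` submatrix `T_J` of `T` formed by
the columns indexed by `J` satisfies `det (T_J) ^ 2 ≤ det (T * Tᵀ)`; in particular, if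
`det (T * Tᵀ) ≠ 0` then `|det T_J| / sqrt (det (T * Tᵀ)) ≤ 1`. -/
theorem stochasticGBC.sq_det_submatrix_le_det_mul_transpose
    (r m : ℕ) (hr : 0 < r) (hm : 0 < m) (hrm : r ≤ m)
    (T : Matrix (Fin r) (Fin m) ℝ) (J : Fin r → Fin m) (hJ : StrictMono J) :
    (T.submatrix id J).det ^ 2 ≤ (T * Tᵀ).det ∧
      ((T * Tᵀ).det ≠ 0 →
        |(T.submatrix id J).det| / Real.sqrt (T * Tᵀ).det ≤ 1) := by
  have hTT : (T * Tᵀ).PosSemidef := by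
    have := Matrix.posSemidef_self_mul_conjTranspose T
    rwa [Matrix.conjTranspose_eq_transpose_of_trivial] at this
  set S := T.submatrix id J with hSdef
  have hDnonneg : 0 ≤ (T * Tᵀ).det := psd_det_nonneg hTT
  have main : S.det ^ 2 ≤ (T * Tᵀ).det := by
    by_cases hS : S.det = 0
    · rw [hS]; simpa using hDnonneg
    · -- S is invertible
      have hSu : IsUnit S.det := isUnit_iff_ne_zero.mpr hS
      set s : Finset (Fin m) := Finset.univ.image J with hsdef
      set R : Matrix (Fin r) ((sᶜ : Finset (Fin m)) : Type) ℝ := fun a j => T a j.1 with hRdef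
      have hsplit : T * Tᵀ = S * Sᵀ + R * Rᵀ := by
        ext a b
        simp only [Matrix.mul_apply, Matrix.add_apply, Matrix.transpose_apply,
          Matrix.submatrix_apply, id]
        rw [← Finset.sum_add_sum_compl s (fun j => T a j * T b j)]
        congr 1
        · rw [Finset.sum_image (fun x _ y _ h => hJ.injective h)]
          simp [hSdef]
        · exact (Finset.sum_coe_sort sᶜ (fun j => T a j * T b j)).symm
      set M : Matrix (Fin r) ((sᶜ : Finset (Fin m)) : Type) ℝ := S⁻¹ * R with hMdef
      have hSM : S * M = R := by
        rw [hMdef, ← Matrix.mul_assoc, Matrix.mul_nonsing_inv _ hSu, Matrix.one_mul]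
      have hfact : T * Tᵀ = S * (1 + M * Mᵀ) * Sᵀ := by
        rw [Matrix.mul_add, Matrix.mul_one, Matrix.add_mul, hsplit]
        congr 1
        rw [Matrix.mul_assoc S (M * Mᵀ) Sᵀ, Matrix.mul_assoc M Mᵀ Sᵀ,
          ← Matrix.transpose_mul S M, ← Matrix.mul_assoc S M, hSM]
      have hMM : (M * Mᵀ).PosSemidef := by
        have := Matrix.posSemidef_self_mul_conjTranspose M
        rwa [Matrix.conjTranspose_eq_transpose_of_trivial] at this
      have h1 : 1 ≤ (1 + M * Mᵀ).det := one_le_det_one_add hMM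
      calc S.det ^ 2 = S.det ^ 2 * 1 := by ring
        _ ≤ S.det ^ 2 * (1 + M * Mᵀ).det := by
            exact mul_le_mul_of_nonneg_left h1 (sq_nonneg _)
        _ = (T * Tᵀ).det := by
            rw [hfact, Matrix.det_mul, Matrix.det_mul, Matrix.det_transpose]; ring
  refine ⟨main, fun hne => ?_⟩
  have hDpos : 0 < (T * Tᵀ).det := lt_of_le_of_ne hDnonneg (Ne.symm hne)
  rw [div_le_one (Real.sqrt_pos.mpr hDpos)]
  calc |S.det| = Real.sqrt (S.det ^ 2) := (Real.sqrt_sq_eq_abs _).symm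
    _ ≤ Real.sqrt (T * Tᵀ).det := Real.sqrt_le_sqrt main
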